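/- The null vector p̃₁ = (1, 0, 0) lies on the spinal spheres of the four bisectors B₁, B₂, B₃, B₄ bounding the Dirichlet domain: ⟨p̃₁, p̃₁⟩ = 0 and |⟨p̃₁, p̃₀⟩| = |⟨p̃₁, G₁·p̃₀⟩| = |⟨p̃₁, G₃⁻¹·p̃₀⟩| = |⟨p̃₁, G₂·G₁·p̃₀⟩| = |⟨p̃₁, G₂·G₃⁻¹·p̃₀⟩| = 1. -/

import Mathlib

noncomputable section

open Matrix

/-- ω = i·√7 -/
def ω : ℂ := Complex.I * Real.sqrt 7

def G₁ : Matrix (Fin 3) (Fin 3) ℂ := !![1, 1, (-1-ω)/2; 0, 1, -1; 0, 0, 1]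

def G₃ : Matrix (Fin 3) (Fin 3) ℂ := !![1, 0, 0; -1, 1, 0; (-1+ω)/2, 1, 1]

def G₂ : Matrix (Fin 3) (Fin 3) ℂ := G₃ * G₁⁻¹ * G₃⁻¹ * G₁

/-- Hermitian form ⟨Z,W⟩ = Z₁·conj(W₃) + Z₂·conj(W₂) + Z₃·conj(W₁). -/
def herm (Z W : Fin 3 → ℂ) : ℂ :=
  Z 0 * (starRingEnd ℂ) (W 2) + Z 1 * (starRingEnd ℂ) (W 1) + Z 2 * (starRingEnd ℂ) (W 0)

def p₀ : Fin 3 → ℂ := ![1, -(3+ω)/4, -1]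
def p₁ : Fin 3 → ℂ := ![1, 0, 0]

lemma hw : ω * ω = -7 := by
  have h7 : (Real.sqrt 7 : ℂ) * (Real.sqrt 7 : ℂ) = 7 := by
    norm_cast
    exact Real.mul_self_sqrt (by norm_num)
  simp only [ω]
  rw [mul_mul_mul_comm, Complex.I_mul_I, h7]
  ring

lemma hw2 : ω ^ 2 = -7 := by rw [sq]; exact hw
lemma hw3 : ω ^ 3 = -7 * ω := by rw [pow_succ, hw2]
lemma hw4 : ω ^ 4 = 49 := by rw [pow_succ, hw3, mul_assoc, hw]; norm_num

lemma hconj : (starRingEnd ℂ) ω = -ω := by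
  simp [ω, Complex.conj_ofReal]

lemma hG1inv : G₁⁻¹ = !![1, -1, (-1+ω)/2; 0, 1, 1; 0, 0, 1] := by
  apply Matrix.inv_eq_right_inv
  ext i j
  fin_cases i <;> fin_cases j <;>
    (simp [G₁, Matrix.mul_apply, Fin.sum_univ_three, Matrix.one_apply,
      Matrix.vecHead, Matrix.vecTail]
     <;> ring_nf <;> simp only [hw2, hw3, hw4] <;> ring_nf)

lemma hG3inv : G₃⁻¹ = !![1, 0, 0; 1, 1, 0; (-1-ω)/2, -1, 1] := by
  apply Matrix.inv_eq_right_inv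
  ext i j
  fin_cases i <;> fin_cases j <;>
    (simp [G₃, Matrix.mul_apply, Fin.sum_univ_three, Matrix.one_apply,
      Matrix.vecHead, Matrix.vecTail]
     <;> ring_nf <;> simp only [hw2, hw3, hw4] <;> ring_nf)

lemma abs_key : ‖(-3 - ω)/4‖ = 1 := by
  have hc : (starRingEnd ℂ) ((-3 - ω)/4) = (-3 + ω)/4 := by
    rw [map_div₀, map_sub, hconj, map_neg, map_ofNat,
      show (starRingEnd ℂ) 4 = 4 from map_ofNat _ 4]
    ring
  have hns : Complex.normSq ((-3 - ω)/4) = 1 := by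
    have h1 : ((Complex.normSq ((-3 - ω)/4) : ℝ) : ℂ) = ((1 : ℝ) : ℂ) := by
      rw [← Complex.mul_conj ((-3 - ω)/4), hc]
      push_cast
      linear_combination (-(1:ℂ)/16) * hw
    exact_mod_cast h1
  rw [Complex.norm_def, hns, Real.sqrt_one]

theorem stmt13 :
    herm p₁ p₁ = 0 ∧
    ‖herm p₁ p₀‖ = 1 ∧
    ‖herm p₁ (G₁ *ᵥ p₀)‖ = 1 ∧
    ‖herm p₁ (G₃⁻¹ *ᵥ p₀)‖ = 1 ∧
    ‖herm p₁ ((G₂ * G₁) *ᵥ p₀)‖ = 1 ∧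
    ‖herm p₁ ((G₂ * G₃⁻¹) *ᵥ p₀)‖ = 1 := by
  have hG2 : G₂ = !![2, (3-ω)/2, -1; (-3-ω)/2, -1, 0; -1, 0, 0] := by
    rw [G₂, hG1inv, hG3inv]
    ext i j
    fin_cases i <;> fin_cases j <;>
      (simp [G₁, G₃, Matrix.mul_apply, Fin.sum_univ_three,
        Matrix.vecHead, Matrix.vecTail]
       <;> ring_nf <;> simp only [hw2, hw3, hw4] <;> ring_nf)
  have hherm : ∀ W : Fin 3 → ℂ, herm p₁ W = (starRingEnd ℂ) (W 2) := by
    intro W; simp [herm, p₁]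
  refine ⟨by simp [herm, p₁], ?_, ?_, ?_, ?_, ?_⟩
  · rw [hherm, Complex.norm_conj]
    simp [p₀]
  · rw [hherm, Complex.norm_conj]
    have h : (G₁ *ᵥ p₀) 2 = -1 := by
      simp [G₁, p₀, Matrix.mulVec, dotProduct, Fin.sum_univ_three,
        Matrix.vecHead, Matrix.vecTail]
    rw [h]; simp
  · rw [hherm, Complex.norm_conj]
    have h : (G₃⁻¹ *ᵥ p₀) 2 = (-3 - ω)/4 := by
      rw [hG3inv]
      simp [p₀, Matrix.mulVec, dotProduct, Fin.sum_univ_three,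
        Matrix.vecHead, Matrix.vecTail]
      ring
    rw [h]; exact abs_key
  · rw [hherm, Complex.norm_conj]
    have h : ((G₂ * G₁) *ᵥ p₀) 2 = (-3 - ω)/4 := by
      rw [hG2]
      simp [G₁, p₀, Matrix.mulVec, dotProduct, Matrix.mul_apply,
        Fin.sum_univ_three, Matrix.vecHead, Matrix.vecTail]
      ring
    rw [h]; exact abs_key
  · rw [hherm, Complex.norm_conj]
    have h : ((G₂ * G₃⁻¹) *ᵥ p₀) 2 = -1 := by
      rw [hG2, hG3inv]
      simp [p₀, Matrix.mulVec, dotProduct, Matrix.mul_apply,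
        Fin.sum_univ_three, Matrix.vecHead, Matrix.vecTail]
    rw [h]; simp
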